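/- Let Ω₁, Ω₂ be compact. If the entropically regularized Kantorovich problem (minimizing ∫ c dπ + γ ∫ π(log π − 1) over probability measures π on Ω₁×Ω₂ with marginals μ and ν) admits a minimizer π̄, then π̄ has a Lebesgue density in L log L(Ω₁×Ω₂), and consequently μ ∈ L log L(Ω₁) and ν ∈ L log L(Ω₂). -/

import Mathlib

open MeasureTheory ENNReal

/-- `log⁺(x) = max (log x) 0`. -/
noncomputable def logPlus (x : ℝ) : ℝ := max (Real.log x) 0

open Classical in
/-- The entropically regularized transport objective of a measure `π`:
`∫ c dπ + γ ∫ π (log π - 1) dx` if `π` is absolutely continuous w.r.t. Lebesgue measure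
(with `π` also denoting the Lebesgue density), and `+∞` otherwise.  The entropy integral
is split into positive and negative parts in the extended reals. -/
noncomputable def regObjective {E : Type*} [MeasureSpace E] (γ : ℝ) (c : E → ℝ)
    (π : Measure E) : EReal :=
  if π ≪ (volume : Measure E) then
    ((∫⁻ p, ENNReal.ofReal (c p) ∂π : ℝ≥0∞) : EReal) +
      (γ : EReal) *
        (((∫⁻ p, ENNReal.ofReal ((π.rnDeriv volume p).toReal *
            (Real.log (π.rnDeriv volume p).toReal - 1)) : ℝ≥0∞) : EReal) -
         ((∫⁻ p, ENNReal.ofReal (-((π.rnDeriv volume p).toReal *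
            (Real.log (π.rnDeriv volume p).toReal - 1))) : ℝ≥0∞) : EReal))
  else ⊤

lemma logPlus_nonneg (x : ℝ) : 0 ≤ logPlus x := le_max_right _ _

lemma measurable_logPlus : Measurable logPlus := Real.measurable_log.max measurable_const

lemma logPlus_of_le_one {x : ℝ} (hx : 0 ≤ x) (h : x ≤ 1) : logPlus x = 0 :=
  max_eq_right (Real.log_nonpos hx h)

lemma logPlus_of_one_lt {x : ℝ} (h : 1 < x) : logPlus x = Real.log x :=
  max_eq_left (Real.log_nonneg h.le)

lemma young_ineq (s t : ℝ) (hs : 0 ≤ s) (ht : 0 ≤ t) :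
    s * logPlus t ≤ s * logPlus s + t := by
  rcases le_or_gt t 1 with h1 | h1
  · rw [logPlus_of_le_one ht h1]
    have := logPlus_nonneg s
    nlinarith
  rw [logPlus_of_one_lt h1]
  rcases le_or_gt s 1 with h2 | h2
  · have h3 : s * Real.log t ≤ Real.log t :=
      mul_le_of_le_one_left (Real.log_nonneg h1.le) h2
    have h4 : Real.log t ≤ t - 1 := Real.log_le_sub_one_of_pos (by linarith)
    have h5 : 0 ≤ s * logPlus s := mul_nonneg hs (logPlus_nonneg s)
    linarith
  · rw [logPlus_of_one_lt h2]
    have hs0 : (0:ℝ) < s := by linarith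
    have hlog : Real.log (t / s) = Real.log t - Real.log s :=
      Real.log_div (by linarith) (by linarith)
    have h4 : Real.log (t / s) ≤ t / s - 1 :=
      Real.log_le_sub_one_of_pos (by positivity)
    have h5 : s * (t / s) = t := by field_simp
    nlinarith

lemma neg_entropy_bound (x : ℝ) (hx : 0 ≤ x) : -(x * (Real.log x - 1)) ≤ 1 := by
  rcases eq_or_lt_of_le hx with h | h
  · simp [← h]
  · have h1 : Real.log (1 / x) ≤ 1 / x - 1 := Real.log_le_sub_one_of_pos (by positivity)
    have h2 : Real.log (1 / x) = -Real.log x := by rw [one_div, Real.log_inv]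
    have h3 : x * (1 / x) = 1 := by field_simp
    nlinarith

lemma llogl_le (x : ℝ) (hx : 0 ≤ x) :
    ENNReal.ofReal (x * logPlus x) ≤
      ENNReal.ofReal (x * (Real.log x - 1)) + ENNReal.ofReal x := by
  rcases le_or_gt x 1 with h | h
  · rw [logPlus_of_le_one hx h, mul_zero]; simp
  · rw [logPlus_of_one_lt h]
    have : x * Real.log x = x * (Real.log x - 1) + x := by ring
    rw [this]
    exact ENNReal.ofReal_add_le

lemma marginal_fst {α β : Type*} [MeasureSpace α] [MeasureSpace β]
    [SigmaFinite (volume : Measure α)] [SigmaFinite (volume : Measure β)]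
    {K : Set β} (hKm : MeasurableSet K) (hKfin : (volume : Measure β) K ≠ ⊤)
    (π : Measure (α × β)) [IsProbabilityMeasure π]
    (hac : π ≪ (volume : Measure (α × β)))
    (hsupp : ∀ᵐ p ∂(volume : Measure (α × β)), π.rnDeriv volume p ≠ 0 → p.2 ∈ K)
    (hI : ∫⁻ p, ENNReal.ofReal ((π.rnDeriv volume p).toReal *
        logPlus (π.rnDeriv volume p).toReal) < ⊤) :
    π.map Prod.fst ≪ (volume : Measure α) ∧
      ∫⁻ x, ENNReal.ofReal (((π.map Prod.fst).rnDeriv volume x).toReal *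
        logPlus ((π.map Prod.fst).rnDeriv volume x).toReal) < ⊤ := by
  set g : α × β → ℝ≥0∞ := π.rnDeriv volume with hg
  have hgm : Measurable g := Measure.measurable_rnDeriv _ _
  have hπeq : (volume : Measure (α × β)).withDensity g = π :=
    Measure.withDensity_rnDeriv_eq _ _ hac
  set f : α → ℝ≥0∞ := fun x => ∫⁻ y, g (x, y) with hf
  have hfm : Measurable f := hgm.lintegral_prod_right'
  have hvol : (volume : Measure (α × β)) = (volume : Measure α).prod volume :=
    Measure.volume_eq_prod α β
  -- the marginal is withDensity f
  have hmap : π.map Prod.fst = (volume : Measure α).withDensity f := by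
    ext s hs
    rw [Measure.map_apply measurable_fst hs, ← hπeq,
      withDensity_apply _ (measurable_fst hs), withDensity_apply _ hs]
    have hpre : (Prod.fst ⁻¹' s : Set (α × β)) = s ×ˢ Set.univ := by ext p; simp
    rw [hpre, hvol, ← Measure.restrict_prod_eq_prod_univ,
      lintegral_prod _ hgm.aemeasurable]
  have hacμ : π.map Prod.fst ≪ (volume : Measure α) := by
    rw [hmap]; exact withDensity_absolutelyContinuous _ _
  refine ⟨hacμ, ?_⟩
  -- replace rnDeriv by f
  have hrn : (π.map Prod.fst).rnDeriv volume =ᵐ[(volume : Measure α)] f := by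
    rw [hmap]; exact Measure.rnDeriv_withDensity _ hfm
  have hcong : ∫⁻ x, ENNReal.ofReal (((π.map Prod.fst).rnDeriv volume x).toReal *
        logPlus ((π.map Prod.fst).rnDeriv volume x).toReal)
      = ∫⁻ x, ENNReal.ofReal ((f x).toReal * logPlus (f x).toReal) := by
    apply lintegral_congr_ae
    filter_upwards [hrn] with x hx
    rw [hx]
  rw [hcong]
  -- total mass of f is 1
  have hftot : ∫⁻ x, f x = 1 := by
    rw [show ∫⁻ x, f x = ∫⁻ x, ∫⁻ y, g (x, y) from rfl,
      ← lintegral_prod _ hgm.aemeasurable, ← hvol, Measure.lintegral_rnDeriv hac,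
      measure_univ]
  -- f is a.e. finite
  have hffin : ∀ᵐ x ∂(volume : Measure α), f x < ⊤ := by
    apply ae_lt_top hfm
    rw [hftot]; exact one_ne_top
  -- g is a.e. finite
  have hgfin : ∀ᵐ p ∂(volume : Measure (α × β)), g p < ⊤ := Measure.rnDeriv_lt_top π volume
  -- the pointwise bound on the product space
  have hbd : ∀ᵐ p ∂(volume : Measure (α × β)),
      ENNReal.ofReal (logPlus (f p.1).toReal) * g p ≤
        ENNReal.ofReal ((g p).toReal * logPlus (g p).toReal) +
          K.indicator (fun _ => ENNReal.ofReal ((f p.1).toReal)) p.2 := by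
    filter_upwards [hsupp, hgfin] with p hK hfin
    rcases eq_or_ne (g p) 0 with h0 | h0
    · simp [h0]
    · rw [Set.indicator_of_mem (hK h0)]
      calc ENNReal.ofReal (logPlus (f p.1).toReal) * g p
          = ENNReal.ofReal (logPlus (f p.1).toReal * (g p).toReal) := by
            rw [ENNReal.ofReal_mul (logPlus_nonneg _), ofReal_toReal hfin.ne]
        _ ≤ ENNReal.ofReal ((g p).toReal * logPlus (g p).toReal + (f p.1).toReal) := by
            apply ENNReal.ofReal_le_ofReal
            rw [mul_comm]
            exact young_ineq _ _ toReal_nonneg toReal_nonneg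
        _ ≤ _ := ENNReal.ofReal_add_le
  -- transfer to iterated a.e.
  rw [hvol] at hbd
  have hbd' := Measure.ae_ae_of_ae_prod hbd
  -- main chain
  have key : ∀ᵐ x ∂(volume : Measure α),
      ENNReal.ofReal ((f x).toReal * logPlus (f x).toReal) ≤
        (∫⁻ y, ENNReal.ofReal ((g (x, y)).toReal * logPlus (g (x, y)).toReal)) +
          volume K * ENNReal.ofReal ((f x).toReal) := by
    filter_upwards [hffin, hbd'] with x hx hbx
    have hgx : Measurable fun y => g (x, y) := hgm.comp measurable_prodMk_left
    have h1 : ENNReal.ofReal ((f x).toReal * logPlus (f x).toReal) =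
        ∫⁻ y, ENNReal.ofReal (logPlus (f x).toReal) * g (x, y) := by
      rw [lintegral_const_mul _ hgx, show (∫⁻ y, g (x, y)) = f x from rfl]
      conv_rhs => rw [← ofReal_toReal hx.ne]
      rw [← ENNReal.ofReal_mul (logPlus_nonneg _), mul_comm, toReal_ofReal toReal_nonneg]
    rw [h1]
    calc ∫⁻ y, ENNReal.ofReal (logPlus (f x).toReal) * g (x, y)
        ≤ ∫⁻ y, (ENNReal.ofReal ((g (x, y)).toReal * logPlus (g (x, y)).toReal) +
            K.indicator (fun _ => ENNReal.ofReal ((f x).toReal)) y) :=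
          lintegral_mono_ae hbx
      _ = (∫⁻ y, ENNReal.ofReal ((g (x, y)).toReal * logPlus (g (x, y)).toReal)) +
            ∫⁻ y, K.indicator (fun _ => ENNReal.ofReal ((f x).toReal)) y := by
          apply lintegral_add_left
          exact ((hgm.comp measurable_prodMk_left).ennreal_toReal.mul
            (measurable_logPlus.comp (hgm.comp measurable_prodMk_left).ennreal_toReal)).ennreal_ofReal
      _ = _ := by rw [lintegral_indicator hKm, setLIntegral_const, mul_comm]
  calc ∫⁻ x, ENNReal.ofReal ((f x).toReal * logPlus (f x).toReal)
      ≤ ∫⁻ x, ((∫⁻ y, ENNReal.ofReal ((g (x, y)).toReal * logPlus (g (x, y)).toReal)) +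
          volume K * ENNReal.ofReal ((f x).toReal)) := lintegral_mono_ae key
    _ = (∫⁻ x, ∫⁻ y, ENNReal.ofReal ((g (x, y)).toReal * logPlus (g (x, y)).toReal)) +
          ∫⁻ x, volume K * ENNReal.ofReal ((f x).toReal) := by
        apply lintegral_add_left
        exact (hgm.ennreal_toReal.mul
          (measurable_logPlus.comp hgm.ennreal_toReal)).ennreal_ofReal.lintegral_prod_right'
    _ ≤ (∫⁻ p, ENNReal.ofReal ((g p).toReal * logPlus (g p).toReal)
          ∂(volume : Measure (α × β))) + volume K * ∫⁻ x, f x := by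
        gcongr
        · rw [hvol, lintegral_prod]
          exact (hgm.ennreal_toReal.mul
            (measurable_logPlus.comp hgm.ennreal_toReal)).ennreal_ofReal.aemeasurable
        · rw [lintegral_const_mul _ hfm.ennreal_toReal.ennreal_ofReal]
          gcongr with x
          exact ofReal_toReal_le
    _ < ⊤ := by
        rw [hftot, mul_one]
        exact ENNReal.add_lt_top.mpr ⟨hI, hKfin.lt_top⟩


/-- If the entropically regularized Kantorovich problem admits a minimizer `pibar` (a feasible
probability measure of finite objective value minimizing the objective among all feasible
measures), then `pibar` has a Lebesgue density in `L log L(Ω₁ × Ω₂)`, and consequently the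
marginals `μ` and `ν` have Lebesgue densities in `L log L(Ω₁)` and `L log L(Ω₂)`. -/
theorem minimizer_density_in_LlogL (n₁ n₂ : ℕ)
    (Ω₁ : Set (Fin n₁ → ℝ)) (Ω₂ : Set (Fin n₂ → ℝ))
    (hΩ₁ : IsCompact Ω₁) (hΩ₂ : IsCompact Ω₂)
    (c : (Fin n₁ → ℝ) × (Fin n₂ → ℝ) → ℝ) (hc : Continuous c) (hc0 : ∀ p, 0 ≤ c p)
    (γ : ℝ) (hγ : 0 < γ)
    (μ : Measure (Fin n₁ → ℝ)) (ν : Measure (Fin n₂ → ℝ))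
    (hμ : IsProbabilityMeasure μ) (hν : IsProbabilityMeasure ν)
    (pibar : Measure ((Fin n₁ → ℝ) × (Fin n₂ → ℝ)))
    (hpibarprob : IsProbabilityMeasure pibar) (hpibarsupp : pibar ((Ω₁ ×ˢ Ω₂)ᶜ) = 0)
    (hpibarm₁ : pibar.map Prod.fst = μ) (hpibarm₂ : pibar.map Prod.snd = ν)
    (hfin : regObjective γ c pibar ≠ ⊤)
    (hmin : ∀ π : Measure ((Fin n₁ → ℝ) × (Fin n₂ → ℝ)), IsProbabilityMeasure π →
      π ((Ω₁ ×ˢ Ω₂)ᶜ) = 0 → π.map Prod.fst = μ → π.map Prod.snd = ν →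
      regObjective γ c pibar ≤ regObjective γ c π) :
    (pibar ≪ (volume : Measure ((Fin n₁ → ℝ) × (Fin n₂ → ℝ))) ∧
      ∫⁻ p, ENNReal.ofReal ((pibar.rnDeriv volume p).toReal *
        logPlus (pibar.rnDeriv volume p).toReal) < ⊤) ∧
    (μ ≪ (volume : Measure (Fin n₁ → ℝ)) ∧
      ∫⁻ x, ENNReal.ofReal ((μ.rnDeriv volume x).toReal *
        logPlus (μ.rnDeriv volume x).toReal) < ⊤) ∧
    (ν ≪ (volume : Measure (Fin n₂ → ℝ)) ∧
      ∫⁻ x, ENNReal.ofReal ((ν.rnDeriv volume x).toReal *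
        logPlus (ν.rnDeriv volume x).toReal) < ⊤) := by
  classical
  haveI := Measure.haveLebesgueDecomposition_of_sigmaFinite pibar
    (volume : Measure ((Fin n₁ → ℝ) × (Fin n₂ → ℝ)))
  -- absolute continuity
  have hac : pibar ≪ (volume : Measure ((Fin n₁ → ℝ) × (Fin n₂ → ℝ))) := by
    by_contra h
    exact hfin (by rw [regObjective, if_neg h])
  set g : (Fin n₁ → ℝ) × (Fin n₂ → ℝ) → ℝ≥0∞ := pibar.rnDeriv volume with hg
  have hgm : Measurable g := Measure.measurable_rnDeriv _ _
  have hπeq : (volume : Measure ((Fin n₁ → ℝ) × (Fin n₂ → ℝ))).withDensity g = pibar :=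
    Measure.withDensity_rnDeriv_eq _ _ hac
  set K : Set ((Fin n₁ → ℝ) × (Fin n₂ → ℝ)) := Ω₁ ×ˢ Ω₂ with hK
  have hKm : MeasurableSet K :=
    (hΩ₁.isClosed.measurableSet).prod (hΩ₂.isClosed.measurableSet)
  have hKfin : (volume : Measure ((Fin n₁ → ℝ) × (Fin n₂ → ℝ))) K ≠ ⊤ := by
    rw [Measure.volume_eq_prod, hK, Measure.prod_prod]
    exact (ENNReal.mul_lt_top hΩ₁.measure_lt_top hΩ₂.measure_lt_top).ne
  -- a.e. support
  have hsupp : ∀ᵐ p ∂(volume : Measure ((Fin n₁ → ℝ) × (Fin n₂ → ℝ))), g p ≠ 0 → p ∈ K := by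
    have h0 : ∫⁻ p in Kᶜ, g p ∂(volume : Measure ((Fin n₁ → ℝ) × (Fin n₂ → ℝ))) = 0 := by
      rw [← withDensity_apply _ hKm.compl, hπeq]; exact hpibarsupp
    have h1 : g =ᵐ[(volume : Measure ((Fin n₁ → ℝ) × (Fin n₂ → ℝ))).restrict Kᶜ] 0 :=
      (lintegral_eq_zero_iff hgm).mp h0
    have h2 := (ae_restrict_iff' hKm.compl).mp h1
    filter_upwards [h2] with p hp hne
    by_contra hpK
    exact hne (hp hpK)
  have hgfin : ∀ᵐ p ∂(volume : Measure ((Fin n₁ → ℝ) × (Fin n₂ → ℝ))), g p < ⊤ := Measure.rnDeriv_lt_top _ _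
  -- the negative-part integral is finite
  set B : ℝ≥0∞ := ∫⁻ p, ENNReal.ofReal (-((g p).toReal * (Real.log (g p).toReal - 1)))
    with hB
  have hBne : B ≠ ⊤ := by
    have hble : B ≤ ∫⁻ p, K.indicator (fun _ => (1 : ℝ≥0∞)) p ∂(volume : Measure ((Fin n₁ → ℝ) × (Fin n₂ → ℝ))) := by
      apply lintegral_mono_ae
      filter_upwards [hsupp] with p hp
      rcases eq_or_ne (g p) 0 with h0 | h0
      · simp [h0]
      · rw [Set.indicator_of_mem (hp h0)]
        calc ENNReal.ofReal (-((g p).toReal * (Real.log (g p).toReal - 1)))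
            ≤ ENNReal.ofReal 1 := ENNReal.ofReal_le_ofReal
              (neg_entropy_bound _ toReal_nonneg)
          _ = 1 := ofReal_one
    rw [lintegral_indicator hKm] at hble
    simp only [lintegral_const, Measure.restrict_apply MeasurableSet.univ, Set.univ_inter,
      one_mul] at hble
    exact (lt_of_le_of_lt hble hKfin.lt_top).ne
  -- the positive-part integral is finite
  set A : ℝ≥0∞ := ∫⁻ p, ENNReal.ofReal ((g p).toReal * (Real.log (g p).toReal - 1)) with hA
  have hAne : A ≠ ⊤ := by
    intro hAtop
    apply hfin
    rw [regObjective, if_pos hac, ← hg, ← hA, ← hB, hAtop]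
    obtain ⟨b, hb⟩ : ∃ b : NNReal, B = (b : ℝ≥0∞) :=
      ⟨B.toNNReal, (ENNReal.coe_toNNReal hBne).symm⟩
    rw [hb, EReal.coe_ennreal_top, EReal.coe_nnreal_eq_coe_real, EReal.top_sub_coe,
      EReal.mul_top_of_pos (by exact_mod_cast hγ),
      EReal.add_top_of_ne_bot (EReal.coe_ennreal_ne_bot _)]
  -- L log L bound on the product
  have hI : ∫⁻ p, ENNReal.ofReal ((g p).toReal * logPlus (g p).toReal) < ⊤ := by
    have hle : ∫⁻ p, ENNReal.ofReal ((g p).toReal * logPlus (g p).toReal) ≤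
        A + ∫⁻ p, ENNReal.ofReal ((g p).toReal) ∂(volume : Measure ((Fin n₁ → ℝ) × (Fin n₂ → ℝ))) := by
      rw [hA, ← lintegral_add_left]
      · exact lintegral_mono fun p => llogl_le _ toReal_nonneg
      · exact (hgm.ennreal_toReal.mul
          ((Real.measurable_log.sub measurable_const).comp hgm.ennreal_toReal)).ennreal_ofReal
    have h1 : ∫⁻ p, ENNReal.ofReal ((g p).toReal) ∂(volume : Measure ((Fin n₁ → ℝ) × (Fin n₂ → ℝ))) ≤ 1 := by
      calc ∫⁻ p, ENNReal.ofReal ((g p).toReal) ∂(volume : Measure ((Fin n₁ → ℝ) × (Fin n₂ → ℝ)))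
          ≤ ∫⁻ p, g p ∂(volume : Measure ((Fin n₁ → ℝ) × (Fin n₂ → ℝ))) := lintegral_mono fun p => ofReal_toReal_le
        _ = pibar Set.univ := Measure.lintegral_rnDeriv hac
        _ = 1 := measure_univ
    calc ∫⁻ p, ENNReal.ofReal ((g p).toReal * logPlus (g p).toReal)
        ≤ A + ∫⁻ p, ENNReal.ofReal ((g p).toReal) ∂(volume : Measure ((Fin n₁ → ℝ) × (Fin n₂ → ℝ))) := hle
      _ ≤ A + 1 := by gcongr
      _ < ⊤ := ENNReal.add_lt_top.mpr ⟨hAne.lt_top, one_lt_top⟩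
  refine ⟨⟨hac, hI⟩, ?_, ?_⟩
  · -- first marginal
    have hKfin₂ : (volume : Measure (Fin n₂ → ℝ)) Ω₂ ≠ ⊤ := hΩ₂.measure_lt_top.ne
    have hsupp₂ : ∀ᵐ p ∂(volume : Measure ((Fin n₁ → ℝ) × (Fin n₂ → ℝ))), pibar.rnDeriv volume p ≠ 0 → p.2 ∈ Ω₂ := by
      filter_upwards [hsupp] with p hp hne
      exact (hp hne).2
    have := marginal_fst hΩ₂.isClosed.measurableSet hKfin₂ pibar hac hsupp₂ hI
    rwa [hpibarm₁] at this
  · -- second marginal via swap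
    set e : ((Fin n₁ → ℝ) × (Fin n₂ → ℝ)) ≃ᵐ (Fin n₂ → ℝ) × (Fin n₁ → ℝ) :=
      MeasurableEquiv.prodComm with he
    have hemb : MeasurableEmbedding
        (e : ((Fin n₁ → ℝ) × (Fin n₂ → ℝ)) → (Fin n₂ → ℝ) × (Fin n₁ → ℝ)) :=
      e.measurableEmbedding
    have hswap : (e : ((Fin n₁ → ℝ) × (Fin n₂ → ℝ)) → (Fin n₂ → ℝ) × (Fin n₁ → ℝ))
        = Prod.swap := rfl
    have hvolmap : (volume : Measure ((Fin n₁ → ℝ) × (Fin n₂ → ℝ))).map e = (volume : Measure ((Fin n₂ → ℝ) × (Fin n₁ → ℝ))) := by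
      rw [Measure.volume_eq_prod, Measure.volume_eq_prod, hswap, Measure.prod_swap]
    set π' : Measure ((Fin n₂ → ℝ) × (Fin n₁ → ℝ)) := pibar.map e with hπ'
    have hπ'prob : IsProbabilityMeasure π' := Measure.isProbabilityMeasure_map
      (e.measurable.aemeasurable)
    have hπ'ac : π' ≪ (volume : Measure ((Fin n₂ → ℝ) × (Fin n₁ → ℝ))) := by
      rw [hπ', ← hvolmap]
      exact hac.map e.measurable
    have hπ'fst : π'.map Prod.fst = ν := by
      rw [hπ', Measure.map_map measurable_fst e.measurable, ← hpibarm₂]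
      rfl
    -- rnDeriv of mapped measure
    have hrn : (fun p : (Fin n₁ → ℝ) × (Fin n₂ → ℝ) => π'.rnDeriv volume (e p))
        =ᵐ[(volume : Measure ((Fin n₁ → ℝ) × (Fin n₂ → ℝ)))] pibar.rnDeriv volume := by
      have h := hemb.rnDeriv_map pibar (volume : Measure ((Fin n₁ → ℝ) × (Fin n₂ → ℝ)))
      rwa [hvolmap] at h
    have hsupp' : ∀ᵐ q ∂(volume : Measure ((Fin n₂ → ℝ) × (Fin n₁ → ℝ))),
        π'.rnDeriv volume q ≠ 0 → q.2 ∈ Ω₁ := by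
      have h : ∀ᵐ q ∂((volume : Measure ((Fin n₁ → ℝ) × (Fin n₂ → ℝ))).map e),
          π'.rnDeriv (volume : Measure ((Fin n₂ → ℝ) × (Fin n₁ → ℝ))) q ≠ 0 → q.2 ∈ Ω₁ := by
        rw [hemb.ae_map_iff]
        filter_upwards [hsupp, hrn] with p hp hrnp hne
        rw [hrnp] at hne
        have h2 : (e p).2 = p.1 := rfl
        rw [h2]
        exact (hp hne).1
      rwa [hvolmap] at h
    have hI' : ∫⁻ q, ENNReal.ofReal ((π'.rnDeriv volume q).toReal *
        logPlus (π'.rnDeriv volume q).toReal) < ⊤ := by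
      have h : ∫⁻ q, ENNReal.ofReal
          ((π'.rnDeriv (volume : Measure ((Fin n₂ → ℝ) × (Fin n₁ → ℝ))) q).toReal *
            logPlus (π'.rnDeriv (volume : Measure ((Fin n₂ → ℝ) × (Fin n₁ → ℝ))) q).toReal)
          ∂((volume : Measure ((Fin n₁ → ℝ) × (Fin n₂ → ℝ))).map e) < ⊤ := by
        have hmf : Measurable fun q : (Fin n₂ → ℝ) × (Fin n₁ → ℝ) => ENNReal.ofReal
            ((π'.rnDeriv (volume : Measure ((Fin n₂ → ℝ) × (Fin n₁ → ℝ))) q).toReal *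
              logPlus (π'.rnDeriv (volume : Measure ((Fin n₂ → ℝ) × (Fin n₁ → ℝ))) q).toReal) :=
          (((Measure.measurable_rnDeriv _ _).ennreal_toReal).mul
            (measurable_logPlus.comp (Measure.measurable_rnDeriv _ _).ennreal_toReal)).ennreal_ofReal
        rw [lintegral_map hmf e.measurable]
        calc ∫⁻ p, ENNReal.ofReal ((π'.rnDeriv volume (e p)).toReal *
              logPlus (π'.rnDeriv volume (e p)).toReal)
              ∂(volume : Measure ((Fin n₁ → ℝ) × (Fin n₂ → ℝ)))
            = ∫⁻ p, ENNReal.ofReal ((g p).toReal * logPlus (g p).toReal)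
                ∂(volume : Measure ((Fin n₁ → ℝ) × (Fin n₂ → ℝ))) := by
              apply lintegral_congr_ae
              filter_upwards [hrn] with p hp
              rw [hp]
          _ < ⊤ := hI
      rwa [hvolmap] at h
    have hres := marginal_fst hΩ₁.isClosed.measurableSet hΩ₁.measure_lt_top.ne π'
      hπ'ac hsupp' hI'
    rwa [hπ'fst] at hres
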